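/- The triple sum Σ_{i=2}^n Σ_{j=2}^i Σ_{k=2}^j 1/(i·(k−1)) equals (n+1)·Σ_{i=1}^n 1/i − 2n for every positive integer n. -/

import Mathlib

open Finset

noncomputable def Haux (n : ℕ) : ℚ := ∑ i ∈ Finset.Icc 1 n, (1 : ℚ) / i

lemma shift_sum (m : ℕ) :
    ∑ k ∈ Finset.Icc 2 (m+2), (1:ℚ)/((k:ℚ)-1) = Haux (m+1) := by
  rw [Haux, show (2:ℕ) = 1 + 1 from rfl, show m + 2 = (m+1) + 1 from rfl,
    ← Finset.map_add_right_Icc 1 (m+1) 1, Finset.sum_map]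
  apply Finset.sum_congr rfl
  intro x hx
  simp only [addRightEmbedding_apply]
  push_cast
  ring_nf

lemma double_sum (m : ℕ) :
    ∑ j ∈ Finset.Icc 2 (m+1), ∑ k ∈ Finset.Icc 2 j, (1:ℚ)/((k:ℚ)-1)
      = (m+1) * Haux m - m := by
  induction m with
  | zero => simp [Haux]
  | succ m ih =>
    rw [show m+1+1 = (m+1)+1 from rfl, Finset.sum_Icc_succ_top (by omega), ih,
      show m+1+1 = m+2 from rfl, shift_sum]
    have hH : Haux (m+1) = Haux m + 1/((m:ℚ)+1) := by
      rw [Haux, Haux, Finset.sum_Icc_succ_top (by omega)]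
      push_cast; ring
    rw [hH]
    have hm1 : ((m:ℚ)+1) ≠ 0 := by positivity
    push_cast
    field_simp
    ring

theorem triple_sum_identity {n : ℕ} (hn : 0 < n) :
    (∑ i ∈ Finset.Icc 2 n, ∑ j ∈ Finset.Icc 2 i, ∑ k ∈ Finset.Icc 2 j,
        (1 : ℚ) / ((i : ℚ) * ((k : ℚ) - 1))) =
      (n + 1) * (∑ i ∈ Finset.Icc 1 n, (1 : ℚ) / i) - 2 * n := by
  induction n with
  | zero => omega
  | succ m ih =>
    rcases Nat.eq_zero_or_pos m with h | h
    · subst h; norm_num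
    · rw [Finset.sum_Icc_succ_top (by omega : 2 ≤ m+1), ih h]
      have key : ∑ j ∈ Finset.Icc 2 (m+1), ∑ k ∈ Finset.Icc 2 j,
          (1:ℚ)/((((m+1:ℕ)):ℚ) * ((k:ℚ)-1))
          = (1/((m:ℚ)+1)) * (((m:ℚ)+1) * Haux m - m) := by
        rw [← double_sum m, Finset.mul_sum]
        refine Finset.sum_congr rfl fun j _ => ?_
        rw [Finset.mul_sum]
        refine Finset.sum_congr rfl fun k _ => ?_
        push_cast
        rw [one_div_mul_one_div]
      rw [key]
      have hH : (∑ i ∈ Finset.Icc 1 (m+1), (1:ℚ)/i) = Haux m + 1/((m:ℚ)+1) := by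
        rw [Haux, Finset.sum_Icc_succ_top (by omega)]; push_cast; ring
      have hHm : (∑ i ∈ Finset.Icc 1 m, (1:ℚ)/i) = Haux m := rfl
      rw [hH, hHm]
      have hm1 : ((m:ℚ)+1) ≠ 0 := by positivity
      push_cast
      field_simp
      ring
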